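/- The Jacobi triple-product-defined functions satisfy the Jacobi identity θ'(0,τ) = π θ₁(0,τ) θ₂(0,τ) θ₃(0,τ), i.e., 2π e^{πiτ/4} ∏_{j≥1}(1−q^j)³ = π · 2e^{πiτ/4}∏_{j≥1}(1−q^j)(1+q^j)² · ∏_{j≥1}(1−q^j)(1−q^{j−1/2})² · ∏_{j≥1}(1−q^j)(1+q^{j−1/2})². -/

import Mathlib

noncomputable section

open Complex Filter

/-- `πC` is the real number `π` viewed as a complex number. -/
def πC : ℂ := Real.pi

section aux

variable {x : ℂ} {g : ℕ → ℂ}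

private lemma aux_ne_zero (hx : ‖x‖ < 1) (hg : ∀ n, ‖g n - 1‖ ≤ ‖x‖ ^ (n + 1)) :
    ∀ n, g n ≠ 0 := by
  intro n h
  have h1 : ‖x‖ ^ (n + 1) < 1 := pow_lt_one₀ (norm_nonneg x) hx (Nat.succ_ne_zero n)
  have h2 := hg n
  rw [h, zero_sub, norm_neg, norm_one] at h2
  linarith

private lemma aux_summable_log (hx : ‖x‖ < 1) (hg : ∀ n, ‖g n - 1‖ ≤ ‖x‖ ^ (n + 1)) :
    Summable fun n => Complex.log (g n) := by
  have hr0 : (0:ℝ) ≤ ‖x‖ := norm_nonneg x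
  have hgeo : Summable (fun n : ℕ => ‖x‖ ^ (n + 1)) :=
    (summable_nat_add_iff 1).mpr (summable_geometric_of_lt_one hr0 hx)
  have htend : Tendsto (fun n : ℕ => ‖x‖ ^ (n + 1)) atTop (nhds 0) :=
    hgeo.tendsto_atTop_zero
  have hev : ∀ᶠ n in atTop, ‖x‖ ^ (n + 1) ≤ 1/2 := by
    have := htend.eventually (eventually_le_nhds (by norm_num : (0:ℝ) < 1/2))
    exact this
  refine Summable.of_norm_bounded_eventually_nat (g := fun n => 3/2 * ‖x‖ ^ (n + 1))
    (hgeo.mul_left _) ?_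
  filter_upwards [hev] with n hn
  have h1 : ‖g n - 1‖ ≤ 1/2 := (hg n).trans hn
  have h2 := Complex.norm_log_one_add_half_le_self h1
  have e : 1 + (g n - 1) = g n := by ring
  rw [e] at h2
  have := hg n
  calc ‖Complex.log (g n)‖ ≤ 3/2 * ‖g n - 1‖ := h2
    _ ≤ 3/2 * ‖x‖ ^ (n + 1) := by linarith

private lemma aux_multipliable (hx : ‖x‖ < 1) (hg : ∀ n, ‖g n - 1‖ ≤ ‖x‖ ^ (n + 1)) :
    Multipliable g :=
  Complex.multipliable_of_summable_log (aux_summable_log hx hg)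

private lemma aux_tprod_ne_zero (hx : ‖x‖ < 1) (hg : ∀ n, ‖g n - 1‖ ≤ ‖x‖ ^ (n + 1)) :
    (∏' n, g n) ≠ 0 := by
  have h := Complex.cexp_tsum_eq_tprod (fun n => aux_ne_zero hx hg n) (aux_summable_log hx hg)
  rw [← h]
  exact Complex.exp_ne_zero _

end aux

private lemma pow_norm_le {x : ℂ} (hx : ‖x‖ < 1) {k n : ℕ} (hk : n + 1 ≤ k) :
    ‖x ^ k‖ ≤ ‖x‖ ^ (n + 1) := by
  rw [norm_pow]
  exact pow_le_pow_of_le_one (norm_nonneg x) hx.le hk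

private lemma key {x : ℂ} (hx : ‖x‖ < 1) :
    (∏' j : ℕ, (1 - x ^ (2 * (j + 1))) ^ 3) =
      (∏' j : ℕ, ((1 - x ^ (2 * (j + 1))) * (1 + x ^ (2 * (j + 1))) ^ 2)) *
      (∏' j : ℕ, ((1 - x ^ (2 * (j + 1))) * (1 - x ^ (2 * j + 1)) ^ 2)) *
      (∏' j : ℕ, ((1 - x ^ (2 * (j + 1))) * (1 + x ^ (2 * j + 1)) ^ 2)) := by
  set A : ℕ → ℂ := fun j => 1 - x ^ (2 * (j + 1)) with hA
  set B : ℕ → ℂ := fun j => 1 + x ^ (2 * (j + 1)) with hB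
  set C : ℕ → ℂ := fun j => 1 - x ^ (2 * j + 1) with hC
  set D : ℕ → ℂ := fun j => 1 + x ^ (2 * j + 1) with hD
  set F : ℕ → ℂ := fun j => 1 - x ^ (4 * (j + 1)) with hF
  set G : ℕ → ℂ := fun j => 1 - x ^ (4 * j + 2) with hG
  have hAb : ∀ n, ‖A n - 1‖ ≤ ‖x‖ ^ (n + 1) := by
    intro n
    show ‖(1 - x ^ (2 * (n + 1))) - 1‖ ≤ ‖x‖ ^ (n + 1)
    rw [sub_sub_cancel_left, norm_neg]
    exact pow_norm_le hx (by omega)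
  have hBb : ∀ n, ‖B n - 1‖ ≤ ‖x‖ ^ (n + 1) := by
    intro n
    show ‖(1 + x ^ (2 * (n + 1))) - 1‖ ≤ ‖x‖ ^ (n + 1)
    rw [add_sub_cancel_left]
    exact pow_norm_le hx (by omega)
  have hCb : ∀ n, ‖C n - 1‖ ≤ ‖x‖ ^ (n + 1) := by
    intro n
    show ‖(1 - x ^ (2 * n + 1)) - 1‖ ≤ ‖x‖ ^ (n + 1)
    rw [sub_sub_cancel_left, norm_neg]
    exact pow_norm_le hx (by omega)
  have hDb : ∀ n, ‖D n - 1‖ ≤ ‖x‖ ^ (n + 1) := by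
    intro n
    show ‖(1 + x ^ (2 * n + 1)) - 1‖ ≤ ‖x‖ ^ (n + 1)
    rw [add_sub_cancel_left]
    exact pow_norm_le hx (by omega)
  have hFb : ∀ n, ‖F n - 1‖ ≤ ‖x‖ ^ (n + 1) := by
    intro n
    show ‖(1 - x ^ (4 * (n + 1))) - 1‖ ≤ ‖x‖ ^ (n + 1)
    rw [sub_sub_cancel_left, norm_neg]
    exact pow_norm_le hx (by omega)
  have hGb : ∀ n, ‖G n - 1‖ ≤ ‖x‖ ^ (n + 1) := by
    intro n
    show ‖(1 - x ^ (4 * n + 2)) - 1‖ ≤ ‖x‖ ^ (n + 1)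
    rw [sub_sub_cancel_left, norm_neg]
    exact pow_norm_le hx (by omega)
  have mA : Multipliable A := aux_multipliable hx hAb
  have mB : Multipliable B := aux_multipliable hx hBb
  have mC : Multipliable C := aux_multipliable hx hCb
  have mD : Multipliable D := aux_multipliable hx hDb
  have mF : Multipliable F := aux_multipliable hx hFb
  have mG : Multipliable G := aux_multipliable hx hGb
  have nA : (∏' n, A n) ≠ 0 := aux_tprod_ne_zero hx hAb
  -- pointwise identities
  have habF : ∀ j, A j * B j = F j := by
    intro j
    simp only [hA, hB, hF]
    have : (1 - x ^ (2 * (j + 1))) * (1 + x ^ (2 * (j + 1))) = 1 - (x ^ (2 * (j + 1))) ^ 2 := by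
      ring
    rw [this, ← pow_mul]
    congr 1
    ring
  have hcdG : ∀ j, C j * D j = G j := by
    intro j
    simp only [hC, hD, hG]
    have : (1 - x ^ (2 * j + 1)) * (1 + x ^ (2 * j + 1)) = 1 - (x ^ (2 * j + 1)) ^ 2 := by
      ring
    rw [this, ← pow_mul]
    congr 1
    ring
  -- step 1 : tA * tB = tF
  have s1 : (∏' n, A n) * (∏' n, B n) = ∏' n, F n := by
    rw [← Multipliable.tprod_mul mA mB]
    exact tprod_congr habF
  -- step 2 : tC * tD = tG
  have s2 : (∏' n, C n) * (∏' n, D n) = ∏' n, G n := by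
    rw [← Multipliable.tprod_mul mC mD]
    exact tprod_congr hcdG
  -- step 3 : even/odd split  tA = tG * tF
  have hAe : (fun k => A (2 * k)) = G := by
    funext k
    simp only [hA, hG]
    congr 1
    congr 1
    ring
  have hAo : (fun k => A (2 * k + 1)) = F := by
    funext k
    simp only [hA, hF]
    congr 1
    congr 1
    ring
  have s3 : (∏' n, A n) = (∏' n, G n) * (∏' n, F n) := by
    have := tprod_even_mul_odd (f := A) (by rw [hAe]; exact mG) (by rw [hAo]; exact mF)
    rw [← this, hAe, hAo]
  -- step 4 : tB * tC * tD = 1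
  have s4 : (∏' n, B n) * ((∏' n, C n) * (∏' n, D n)) = 1 := by
    have h : (∏' n, A n) * ((∏' n, B n) * ((∏' n, C n) * (∏' n, D n))) = (∏' n, A n) * 1 := by
      rw [mul_one]
      calc (∏' n, A n) * ((∏' n, B n) * ((∏' n, C n) * (∏' n, D n)))
          = ((∏' n, A n) * (∏' n, B n)) * ((∏' n, C n) * (∏' n, D n)) := by ring
        _ = (∏' n, F n) * (∏' n, G n) := by rw [s1, s2]
        _ = (∏' n, A n) := by rw [s3]; ring
    exact mul_left_cancel₀ nA h
  -- final assembly
  have e1 : (∏' j : ℕ, (A j) ^ 3) = (∏' n, A n) ^ 3 := by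
    have h : (fun j => (A j) ^ 3) = fun j => A j * (A j * A j) := by
      funext j; ring
    rw [h, Multipliable.tprod_mul mA (mA.mul mA), Multipliable.tprod_mul mA mA]
    ring
  have e2 : (∏' j : ℕ, (A j * (B j) ^ 2)) = (∏' n, A n) * (∏' n, B n) ^ 2 := by
    have h : (fun j => A j * (B j) ^ 2) = fun j => A j * (B j * B j) := by
      funext j; ring
    rw [h, Multipliable.tprod_mul mA (mB.mul mB), Multipliable.tprod_mul mB mB]
    ring
  have e3 : (∏' j : ℕ, (A j * (C j) ^ 2)) = (∏' n, A n) * (∏' n, C n) ^ 2 := by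
    have h : (fun j => A j * (C j) ^ 2) = fun j => A j * (C j * C j) := by
      funext j; ring
    rw [h, Multipliable.tprod_mul mA (mC.mul mC), Multipliable.tprod_mul mC mC]
    ring
  have e4 : (∏' j : ℕ, (A j * (D j) ^ 2)) = (∏' n, A n) * (∏' n, D n) ^ 2 := by
    have h : (fun j => A j * (D j) ^ 2) = fun j => A j * (D j * D j) := by
      funext j; ring
    rw [h, Multipliable.tprod_mul mA (mD.mul mD), Multipliable.tprod_mul mD mD]
    ring
  calc (∏' j : ℕ, (A j) ^ 3) = (∏' n, A n) ^ 3 := e1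
    _ = (∏' n, A n) ^ 3 * ((∏' n, B n) * ((∏' n, C n) * (∏' n, D n))) ^ 2 := by
        rw [s4]; ring
    _ = ((∏' n, A n) * (∏' n, B n) ^ 2) * ((∏' n, A n) * (∏' n, C n) ^ 2) *
        ((∏' n, A n) * (∏' n, D n) ^ 2) := by ring
    _ = _ := by rw [← e2, ← e3, ← e4]

/-- The Jacobi identity `θ'(0,τ) = π θ₁(0,τ) θ₂(0,τ) θ₃(0,τ)`:
`2π e^{πiτ/4} ∏_{j≥1}(1−q^j)³ =
π · 2e^{πiτ/4}∏_{j≥1}(1−q^j)(1+q^j)² · ∏_{j≥1}(1−q^j)(1−q^{j−1/2})² ·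
∏_{j≥1}(1−q^j)(1+q^{j−1/2})²`, where `q = e^{2πiτ}` and `q^{1/2} = e^{πiτ}`. -/
theorem jacobi_identity (τ : ℂ) (hτ : 0 < τ.im) :
    2 * πC * Complex.exp (πC * Complex.I * τ / 4) *
        ∏' j : ℕ, (1 - Complex.exp (πC * Complex.I * τ) ^ (2 * (j + 1))) ^ 3 =
      πC *
        (2 * Complex.exp (πC * Complex.I * τ / 4) *
          ∏' j : ℕ, ((1 - Complex.exp (πC * Complex.I * τ) ^ (2 * (j + 1))) *
            (1 + Complex.exp (πC * Complex.I * τ) ^ (2 * (j + 1))) ^ 2)) *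
        (∏' j : ℕ, ((1 - Complex.exp (πC * Complex.I * τ) ^ (2 * (j + 1))) *
            (1 - Complex.exp (πC * Complex.I * τ) ^ (2 * j + 1)) ^ 2)) *
        (∏' j : ℕ, ((1 - Complex.exp (πC * Complex.I * τ) ^ (2 * (j + 1))) *
            (1 + Complex.exp (πC * Complex.I * τ) ^ (2 * j + 1)) ^ 2)) := by
  have hre : (πC * Complex.I * τ).re = -(Real.pi * τ.im) := by
    simp [πC, Complex.mul_re, Complex.mul_im]
  have hx : ‖Complex.exp (πC * Complex.I * τ)‖ < 1 := by
    rw [Complex.norm_exp, hre]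
    have hp : 0 < Real.pi * τ.im := mul_pos Real.pi_pos hτ
    calc Real.exp (-(Real.pi * τ.im)) < Real.exp 0 := Real.exp_lt_exp.mpr (by linarith)
      _ = 1 := Real.exp_zero
  rw [key hx]
  ring
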